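/- For every binary path P of length n starting with a downstep and every positive integer k, there is a bijection between multichains P = P_0 ≤ P_1 ≤ ⋯ ≤ P_k = 1_n in the lattice of binary paths and shifted tableaux T of shape λ(P) with max(T) ≤ k, where the tableau entry at cell (i,j) is t_{ij} = k − ξ for the unique ξ with h_{n+i−j}(P_ξ) ≤ n − i − j < h_{n+i−j}(P_{ξ+1}). -/

import Mathlib

open Finset

/-- The `x`-th step (1-indexed) of a binary path `P` of length `n`;
`true` denotes an upstep `u`, `false` a downstep `d`. -/
def stp (n : ℕ) (P : Fin n → Bool) (x : ℕ) : Bool :=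
  if h : 1 ≤ x ∧ x ≤ n then P ⟨x - 1, by omega⟩ else true

/-- The height of the `x`-th lattice point of the path (the partial sum of `±1`'s). -/
def ht (n : ℕ) (P : Fin n → Bool) (x : ℕ) : ℤ :=
  ∑ j ∈ Finset.Icc 1 x, (if stp n P j then (1 : ℤ) else -1)

/-- The order on binary paths: `P ≤ Q` iff every height of `P` is at most that of `Q`. -/
def pLE (n : ℕ) (P Q : Fin n → Bool) : Prop := ∀ x ≤ n, ht n P x ≤ ht n Q x

def pLT (n : ℕ) (P Q : Fin n → Bool) : Prop := pLE n P Q ∧ ¬ pLE n Q P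

/-- `Q` covers `P` in the lattice of binary paths. -/
def covers (n : ℕ) (P Q : Fin n → Bool) : Prop :=
  pLT n P Q ∧ ∀ R, pLT n P R → ¬ pLT n R Q

/-- The `x`-th point of `P` is a valley: last point of a maximal run of downsteps. -/
def valley (n : ℕ) (P : Fin n → Bool) (x : ℕ) : Prop :=
  1 ≤ x ∧ x ≤ n ∧ stp n P x = false ∧ (x = n ∨ stp n P (x + 1) = true)

/-- The maximum path `1_n = u^n`. -/
def pTop (n : ℕ) : Fin n → Bool := fun _ => true

/-- The minimum path `0_n = d^n`. -/
def pBot (n : ℕ) : Fin n → Bool := fun _ => false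

/-- The set of positions of downsteps of `P`. -/
def dsteps (n : ℕ) (P : Fin n → Bool) : Finset (Fin n) :=
  Finset.univ.filter fun j => P j = false

/-- `m(P) = |P|_d`, the number of downsteps of `P`. -/
def nd (n : ℕ) (P : Fin n → Bool) : ℕ := (dsteps n P).card

/-- The 0-indexed position of the `(i+1)`-st downstep of `P`. -/
def dpos (n : ℕ) (P : Fin n → Bool) (i : Fin (nd n P)) : ℕ :=
  (((dsteps n P).orderIsoOfFin rfl i : {x // x ∈ dsteps n P}) : Fin n)

/-- The part `λ_{i+1} = n − (i+1) − k_{i+1} + 1` of the strict partition `λ(P)`;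
since `k_{i+1} = dpos i − i`, this equals `n − dpos i`. -/
def lam (n : ℕ) (P : Fin n → Bool) (i : Fin (nd n P)) : ℕ := n - dpos n P i

/-- The shifted diagram `F(P)` of shape `λ(P)`, as the set of (1-indexed) cells
`(i, j)` with `i ∈ [m]`, `i ≤ j ≤ λ_i + i − 1`. -/
def F (n : ℕ) (P : Fin n → Bool) : Set (ℕ × ℕ) :=
  {c | ∃ i : Fin (nd n P),
    c.1 = (i : ℕ) + 1 ∧ (i : ℕ) + 1 ≤ c.2 ∧ c.2 ≤ lam n P i + (i : ℕ)}

/-- The `x`-coordinate `n + i − j` of the lattice point of cell `c = (i,j)`. -/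
def cellX (n : ℕ) (c : ℕ × ℕ) : ℕ := n + c.1 - c.2

/-- The `y`-coordinate `n − i − j` of the lattice point of cell `c = (i,j)`. -/
def cellY (n : ℕ) (c : ℕ × ℕ) : ℤ := (n : ℤ) - c.1 - c.2

/-- A shifted tableau of shape `λ(P)`: positive entries, weakly increasing along
rows and columns. -/
def isTab (n : ℕ) (P : Fin n → Bool) (T : {c : ℕ × ℕ // c ∈ F n P} → ℕ) : Prop :=
  (∀ c, 0 < T c) ∧
  (∀ c c' : {c : ℕ × ℕ // c ∈ F n P},
    c.1.1 = c'.1.1 → c.1.2 + 1 = c'.1.2 → T c ≤ T c') ∧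
  (∀ c c' : {c : ℕ × ℕ // c ∈ F n P},
    c.1.1 + 1 = c'.1.1 → c.1.2 = c'.1.2 → T c ≤ T c')

/-- A shifted tableau is strictly increasing along rows and columns. -/
def isStrictTab (n : ℕ) (P : Fin n → Bool)
    (T : {c : ℕ × ℕ // c ∈ F n P} → ℕ) : Prop :=
  (∀ c c' : {c : ℕ × ℕ // c ∈ F n P},
    c.1.1 = c'.1.1 → c.1.2 + 1 = c'.1.2 → T c < T c') ∧
  (∀ c c' : {c : ℕ × ℕ // c ∈ F n P},
    c.1.1 + 1 = c'.1.1 → c.1.2 = c'.1.2 → T c < T c')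

/-- A multichain `P = P_0 ≤ P_1 ≤ ⋯ ≤ P_k = u^n`. -/
def isMultichain (n k : ℕ) (P : Fin n → Bool)
    (C : Fin (k + 1) → Fin n → Bool) : Prop :=
  (∀ i : Fin k, pLE n (C i.castSucc) (C i.succ)) ∧ C 0 = P ∧ C (Fin.last k) = pTop n

/-- The defining relation of the bijection: the entry at cell `(i,j)` is `k − ξ`
for the unique `ξ` with `h_{n+i−j}(P_ξ) ≤ n − i − j < h_{n+i−j}(P_{ξ+1})`. -/
def corr (n k : ℕ) (P : Fin n → Bool) (C : Fin (k + 1) → Fin n → Bool)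
    (T : {c : ℕ × ℕ // c ∈ F n P} → ℕ) : Prop :=
  ∀ (c : {c : ℕ × ℕ // c ∈ F n P}) (ξ : ℕ) (hξ : ξ < k),
    (T c = k - ξ ↔
      (ht n (C ⟨ξ, by omega⟩) (cellX n c.1) ≤ cellY n c.1 ∧
       cellY n c.1 < ht n (C ⟨ξ + 1, by omega⟩) (cellX n c.1)))

section Aux

variable {n : ℕ}

lemma stp_of_lt (Q : Fin n → Bool) {x : ℕ} (h : x < n) : stp n Q (x+1) = Q ⟨x, h⟩ := by
  unfold stp
  rw [dif_pos ⟨by omega, by omega⟩]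
  congr 1

lemma ht_zero (Q : Fin n → Bool) : ht n Q 0 = 0 := by simp [ht]

lemma ht_succ (Q : Fin n → Bool) (x : ℕ) :
    ht n Q (x+1) = ht n Q x + (if stp n Q (x+1) then (1:ℤ) else -1) := by
  unfold ht
  rw [Finset.sum_Icc_succ_top (by omega)]

/-- number of downsteps among the first `x` steps -/
def dcQ (n : ℕ) (Q : Fin n → Bool) (x : ℕ) : ℕ :=
  ((Finset.Icc 1 x).filter (fun j => stp n Q j = false)).card

lemma dcQ_zero (Q : Fin n → Bool) : dcQ n Q 0 = 0 := by simp [dcQ]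

lemma dcQ_succ (Q : Fin n → Bool) (x : ℕ) :
    dcQ n Q (x+1) = dcQ n Q x + (if stp n Q (x+1) = false then 1 else 0) := by
  unfold dcQ
  rw [show Finset.Icc 1 (x+1) = insert (x+1) (Finset.Icc 1 x) by
    rw [← Finset.insert_Icc_right_eq_Icc_add_one (by omega)]]
  rw [Finset.filter_insert]
  split
  · rw [Finset.card_insert_of_notMem (by simp)]
  · omega

lemma ht_eq (Q : Fin n → Bool) (x : ℕ) :
    ht n Q x = (x : ℤ) - 2 * dcQ n Q x := by
  induction x with
  | zero => simp [ht_zero, dcQ_zero]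
  | succ x ih =>
    rw [ht_succ, dcQ_succ, ih]
    cases h : stp n Q (x+1) <;> simp <;> push_cast <;> ring

lemma dcQ_mono (Q : Fin n → Bool) {x y : ℕ} (h : x ≤ y) : dcQ n Q x ≤ dcQ n Q y := by
  apply Finset.card_le_card
  exact Finset.filter_subset_filter _ (Finset.Icc_subset_Icc_right h)

lemma dcQ_le (Q : Fin n → Bool) (x : ℕ) : dcQ n Q x ≤ x := by
  calc dcQ n Q x ≤ (Finset.Icc 1 x).card := Finset.card_filter_le _ _
  _ = x := by rw [Nat.card_Icc]; omega

lemma dcQ_succ_le (Q : Fin n → Bool) (x : ℕ) : dcQ n Q (x+1) ≤ dcQ n Q x + 1 := by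
  rw [dcQ_succ]; split <;> omega

lemma ht_lipschitz (Q : Fin n → Bool) (x : ℕ) :
    ht n Q (x+1) = ht n Q x + 1 ∨ ht n Q (x+1) = ht n Q x - 1 := by
  rw [ht_succ]; split <;> [left; right] <;> ring

lemma ht_ext {Q Q' : Fin n → Bool} (h : ∀ x ≤ n, ht n Q x = ht n Q' x) : Q = Q' := by
  funext j
  have h1 := h j (by omega)
  have h2 := h (j+1) (by omega)
  rw [ht_succ, ht_succ, stp_of_lt Q j.isLt, stp_of_lt Q' j.isLt] at h2
  cases hq : Q j <;> cases hq' : Q' j <;> simp [hq, hq'] at h2 ⊢ <;> omega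

lemma ht_pTop (x : ℕ) : ht n (pTop n) x = x := by
  have : ∀ j, stp n (pTop n) j = true := by
    intro j; unfold stp pTop; split <;> rfl
  unfold ht
  simp only [this, if_true]
  rw [Finset.sum_const, Nat.card_Icc]
  simp

lemma dcards (P : Fin n → Bool) {x : ℕ} (hx : x ≤ n) :
    ((dsteps n P).filter (fun a : Fin n => (a : ℕ) < x)).card = dcQ n P x := by
  unfold dcQ
  apply Finset.card_bij (fun (a : Fin n) (_ : a ∈ (dsteps n P).filter (fun a : Fin n => (a : ℕ) < x)) => (a : ℕ) + 1)
  · intro a ha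
    simp only [Finset.mem_filter, dsteps, Finset.mem_univ, true_and] at ha
    simp only [Finset.mem_filter, Finset.mem_Icc]
    refine ⟨⟨by omega, by omega⟩, ?_⟩
    rw [stp_of_lt P a.isLt, Fin.eta]
    exact ha.1
  · intro a ha b hb hab
    exact Fin.ext (by omega)
  · intro b hb
    simp only [Finset.mem_filter, Finset.mem_Icc] at hb
    refine ⟨⟨b - 1, by omega⟩, ?_, by show b - 1 + 1 = b; omega⟩
    simp only [Finset.mem_filter, dsteps, Finset.mem_univ, true_and]
    constructor
    · have := hb.2
      rw [show b = (b-1)+1 by omega, stp_of_lt P (show b - 1 < n by omega)] at this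
      exact this
    · show b - 1 < x
      omega

lemma dcQ_le_nd (P : Fin n → Bool) {x : ℕ} (hx : x ≤ n) : dcQ n P x ≤ nd n P := by
  rw [← dcards P hx]
  exact Finset.card_filter_le _ _

lemma dpos_lt (P : Fin n → Bool) (i : Fin (nd n P)) : dpos n P i < n := by
  exact (((dsteps n P).orderIsoOfFin rfl i : {x // x ∈ dsteps n P}) : Fin n).isLt

lemma dpos_eq (P : Fin n → Bool) (i : Fin (nd n P)) :
    dpos n P i = (((dsteps n P).orderEmbOfFin rfl i : Fin n) : ℕ) := by
  unfold dpos
  rfl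

lemma dpos_lt_iff (P : Fin n → Bool) {x : ℕ} (hx : x ≤ n) (i : Fin (nd n P)) :
    dpos n P i < x ↔ (i : ℕ) < dcQ n P x := by
  rw [← dcards P hx]
  set s := dsteps n P with hs
  set emb := s.orderEmbOfFin rfl with hemb
  have hcard : nd n P = s.card := rfl
  constructor
  · intro h
    have hmaps : ∀ j ∈ Finset.range ((i : ℕ) + 1),
        (emb ⟨min j (i : ℕ), by omega⟩ : Fin n) ∈
          s.filter (fun a : Fin n => (a : ℕ) < x) := by
      intro j hj
      simp only [Finset.mem_filter]
      refine ⟨Finset.orderEmbOfFin_mem _ _ _, ?_⟩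
      have h1 : emb ⟨min j (i : ℕ), by omega⟩ ≤ emb i :=
        emb.monotone (Fin.le_def.mpr (min_le_right j (i : ℕ)))
      have h2 : ((emb i : Fin n) : ℕ) = dpos n P i := (dpos_eq P i).symm
      have h3 := Fin.le_def.mp h1
      show ((emb ⟨min j (i:ℕ), by omega⟩ : Fin n) : ℕ) < x
      omega
    have hinj : Set.InjOn (fun j => (emb ⟨min j (i : ℕ), by omega⟩ : Fin n))
        ((Finset.range ((i : ℕ) + 1)) : Finset ℕ) := by
      intro a ha b hb hab
      simp only [Finset.coe_range, Set.mem_Iio] at ha hb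
      have h1 := emb.injective hab
      have h2 : min a (i:ℕ) = min b (i:ℕ) := congrArg Fin.val h1
      omega
    have := Finset.card_le_card_of_injOn _ hmaps hinj
    simp only [Finset.card_range] at this
    omega
  · intro h
    by_contra hc
    push_neg at hc
    classical
    set f : Fin n → ℕ := fun a =>
      if ha : a ∈ s then ((s.orderIsoOfFin rfl).symm ⟨a, ha⟩ : Fin (nd n P)) else 0
      with hf
    have hmaps : ∀ a ∈ s.filter (fun a : Fin n => (a : ℕ) < x),
        f a ∈ Finset.range (i : ℕ) := by
      intro a ha
      simp only [Finset.mem_filter] at ha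
      rw [hf]
      simp only [dif_pos ha.1, Finset.mem_range]
      by_contra hge
      push_neg at hge
      have hle : i ≤ (s.orderIsoOfFin rfl).symm ⟨a, ha.1⟩ := hge
      have h1 := (s.orderIsoOfFin rfl).monotone hle
      have happ : (s.orderIsoOfFin rfl) ((s.orderIsoOfFin rfl).symm ⟨a, ha.1⟩) = ⟨a, ha.1⟩ :=
        (s.orderIsoOfFin rfl).apply_symm_apply _
      rw [happ] at h1
      have h2 : ((s.orderIsoOfFin rfl i : {y // y ∈ s}) : Fin n) ≤ a := h1
      have h3 : dpos n P i ≤ (a : ℕ) := h2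
      have := ha.2
      omega
    have hinj : Set.InjOn f ((s.filter (fun a : Fin n => (a : ℕ) < x)) : Finset (Fin n)) := by
      intro a ha b hb hab
      simp only [Finset.coe_filter, Set.mem_setOf_eq] at ha hb
      rw [hf] at hab
      simp only [dif_pos ha.1, dif_pos hb.1] at hab
      have := (s.orderIsoOfFin rfl).symm.injective (Fin.ext hab : _)
      have := congrArg Subtype.val this
      exact this
    have := Finset.card_le_card_of_injOn _ hmaps hinj
    simp only [Finset.card_range] at this
    omega

lemma mem_F_iff (P : Fin n → Bool) (r j : ℕ) :
    (r, j) ∈ F n P ↔ 1 ≤ r ∧ r ≤ j ∧ j + 1 ≤ n + r ∧ r ≤ dcQ n P (n + r - j) := by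
  constructor
  · rintro ⟨i, h1, h2, h3⟩
    simp only at h1 h2 h3
    subst h1
    have hdp := dpos_lt P i
    have hlam : lam n P i = n - dpos n P i := rfl
    rw [hlam] at h3
    have hxn : n + ((i:ℕ)+1) - j ≤ n := by omega
    have hdx : dpos n P i < n + ((i:ℕ)+1) - j := by omega
    have := (dpos_lt_iff P hxn i).mp hdx
    refine ⟨by omega, by omega, by omega, by omega⟩
  · rintro ⟨h1, h2, h3, h4⟩
    have hxn : n + r - j ≤ n := by omega
    have hm : r ≤ nd n P := le_trans h4 (dcQ_le_nd P hxn)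
    refine ⟨⟨r - 1, by omega⟩, by simp only; omega, by simp only; omega, ?_⟩
    have hdx := (dpos_lt_iff P hxn ⟨r - 1, by omega⟩).mpr (by simp only; omega)
    have hdp := dpos_lt P (⟨r - 1, by omega⟩ : Fin (nd n P))
    have hlam : lam n P ⟨r-1, by omega⟩ = n - dpos n P ⟨r-1, by omega⟩ := rfl
    rw [hlam]
    simp only
    omega

/-- the cell of column `x`, row `r` -/
def cellOf (n x r : ℕ) : ℕ × ℕ := (r, n + r - x)

lemma cellOf_mem (P : Fin n → Bool) {x r : ℕ} (hx : x ≤ n) (hr : 1 ≤ r)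
    (hrd : r ≤ dcQ n P x) : cellOf n x r ∈ F n P := by
  have hx1 : 1 ≤ x := by
    by_contra h
    have hx0 : x = 0 := by omega
    rw [hx0, dcQ_zero] at hrd; omega
  rw [show cellOf n x r = (r, n + r - x) from rfl, mem_F_iff]
  have he : n + r - (n + r - x) = x := by omega
  exact ⟨hr, by omega, by omega, by rw [he]; exact hrd⟩

lemma cell_facts (P : Fin n → Bool) {c : ℕ × ℕ} (hc : c ∈ F n P) :
    1 ≤ c.1 ∧ 1 ≤ cellX n c ∧ cellX n c ≤ n ∧ c.1 ≤ dcQ n P (cellX n c) ∧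
      c = cellOf n (cellX n c) c.1 ∧ cellY n c = (cellX n c : ℤ) - 2 * c.1 := by
  obtain ⟨r, j⟩ := c
  rw [mem_F_iff] at hc
  obtain ⟨h1, h2, h3, h4⟩ := hc
  have hx : cellX n (r, j) = n + r - j := rfl
  have hx1 : 1 ≤ dcQ n P (n + r - j) := le_trans h1 h4
  have hxpos : 1 ≤ n + r - j := by
    by_contra h
    have h0 : n + r - j = 0 := by omega
    rw [h0, dcQ_zero] at hx1; omega
  refine ⟨h1, by omega, by omega, h4, ?_, ?_⟩
  · rw [hx, cellOf]
    simp only [Prod.mk.injEq, true_and]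
    omega
  · rw [hx, cellY]
    simp only
    omega

open Classical in
/-- the value of a tableau at the cell of column `x`, row `r` -/
noncomputable def Tv {P : Fin n → Bool} (T : {c : ℕ × ℕ // c ∈ F n P} → ℕ)
    (x r : ℕ) : ℕ :=
  if h : cellOf n x r ∈ F n P then T ⟨cellOf n x r, h⟩ else 0

lemma Tv_le {P : Fin n → Bool} {T : {c : ℕ × ℕ // c ∈ F n P} → ℕ} {k : ℕ}
    (hTk : ∀ c, T c ≤ k) (x r : ℕ) : Tv T x r ≤ k := by
  unfold Tv; split
  · exact hTk _
  · omega

lemma Tv_mem {P : Fin n → Bool} {T : {c : ℕ × ℕ // c ∈ F n P} → ℕ}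
    {x r : ℕ} (h : cellOf n x r ∈ F n P) : Tv T x r = T ⟨cellOf n x r, h⟩ := dif_pos h

lemma row_rel {P : Fin n → Bool} {T : {c : ℕ × ℕ // c ∈ F n P} → ℕ}
    (hT : isTab n P T) {x r : ℕ} (hx : x + 1 ≤ n)
    (h1 : cellOf n (x+1) r ∈ F n P) (h2 : cellOf n x r ∈ F n P) :
    Tv T (x+1) r ≤ Tv T x r := by
  rw [Tv_mem h1, Tv_mem h2]
  exact hT.2.1 _ _ rfl (by show n + r - (x+1) + 1 = n + r - x; omega)

lemma diag_rel {P : Fin n → Bool} {T : {c : ℕ × ℕ // c ∈ F n P} → ℕ}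
    (hT : isTab n P T) {x r : ℕ} (hx : x + 1 ≤ n)
    (h1 : cellOf n x r ∈ F n P) (h2 : cellOf n (x+1) (r+1) ∈ F n P) :
    Tv T x r ≤ Tv T (x+1) (r+1) := by
  rw [Tv_mem h1, Tv_mem h2]
  exact hT.2.2 _ _ rfl (by show n + r - x = n + (r+1) - (x+1); omega)

lemma colMono {P : Fin n → Bool} {T : {c : ℕ × ℕ // c ∈ F n P} → ℕ}
    (hT : isTab n P T) {x r : ℕ} (hx : x ≤ n) (hr : 1 ≤ r)
    (hrd : r + 1 ≤ dcQ n P x) : Tv T x r ≤ Tv T x (r+1) := by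
  have hdle := dcQ_le P x
  have hx2 : 2 ≤ x := by omega
  have hx' : x - 1 + 1 = x := by omega
  have hd1 : r ≤ dcQ n P (x-1) := by
    have := dcQ_succ_le P (x-1)
    rw [hx'] at this
    omega
  have m1 : cellOf n (x-1) r ∈ F n P := cellOf_mem P (by omega) hr hd1
  have m2 : cellOf n x r ∈ F n P := cellOf_mem P hx hr (by omega)
  have m3 : cellOf n x (r+1) ∈ F n P := cellOf_mem P hx (by omega) hrd
  have s1 : Tv T x r ≤ Tv T (x-1) r := by
    have := row_rel hT (x := x - 1) (r := r) (by omega) (by rw [hx']; exact m2) m1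
    rw [hx'] at this
    exact this
  have s2 : Tv T (x-1) r ≤ Tv T x (r+1) := by
    have := diag_rel hT (x := x - 1) (r := r) (by omega) m1 (by rw [hx']; exact m3)
    rw [hx'] at this
    exact this
  omega

lemma colMono' {P : Fin n → Bool} {T : {c : ℕ × ℕ // c ∈ F n P} → ℕ}
    (hT : isTab n P T) {x r r' : ℕ} (hx : x ≤ n) (hr : 1 ≤ r)
    (hrr : r ≤ r') (hrd : r' ≤ dcQ n P x) : Tv T x r ≤ Tv T x r' := by
  induction r', hrr using Nat.le_induction with
  | base => exact le_refl _
  | succ m hm ih =>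
    have h1 : Tv T x r ≤ Tv T x m := ih (by omega)
    have h2 : Tv T x m ≤ Tv T x (m+1) := colMono hT hx (by omega) hrd
    omega

/-- `cnt k T ξ x` = number of cells in column `x` whose entry exceeds `k - ξ` -/
noncomputable def cnt {P : Fin n → Bool} (k : ℕ) (T : {c : ℕ × ℕ // c ∈ F n P} → ℕ)
    (ξ x : ℕ) : ℕ :=
  ((Finset.Icc 1 (dcQ n P x)).filter (fun r => k - ξ < Tv T x r)).card

/-- candidate heights of the `ξ`-th path recovered from a tableau -/
noncomputable def htsT {P : Fin n → Bool} (k : ℕ) (T : {c : ℕ × ℕ // c ∈ F n P} → ℕ)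
    (ξ x : ℕ) : ℤ :=
  ht n P x + 2 * cnt k T ξ x

/-- the `ξ`-th path recovered from a tableau -/
noncomputable def bwdPath {P : Fin n → Bool} (k : ℕ)
    (T : {c : ℕ × ℕ // c ∈ F n P} → ℕ) (ξ : ℕ) : Fin n → Bool :=
  fun j => decide (htsT k T ξ (j : ℕ) < htsT k T ξ ((j : ℕ) + 1))

lemma cnt_zero {P : Fin n → Bool} {k : ℕ} {T : {c : ℕ × ℕ // c ∈ F n P} → ℕ}
    (hTk : ∀ c, T c ≤ k) (x : ℕ) : cnt k T 0 x = 0 := by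
  unfold cnt
  rw [Finset.filter_false_of_mem, Finset.card_empty]
  intro r hr
  have := Tv_le (T := T) hTk x r
  omega

lemma cnt_k {P : Fin n → Bool} {k : ℕ} {T : {c : ℕ × ℕ // c ∈ F n P} → ℕ}
    (hT : isTab n P T) {x : ℕ} (hx : x ≤ n) {ξ : ℕ} (hξ : k ≤ ξ) :
    cnt k T ξ x = dcQ n P x := by
  unfold cnt
  rw [Finset.filter_true_of_mem, Nat.card_Icc]
  · omega
  · intro r hr
    rw [Finset.mem_Icc] at hr
    have hmem := cellOf_mem P hx hr.1 hr.2
    rw [Tv_mem hmem]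
    have := hT.1 ⟨cellOf n x r, hmem⟩
    omega

lemma cnt_mono {P : Fin n → Bool} {k : ℕ} {T : {c : ℕ × ℕ // c ∈ F n P} → ℕ}
    {ξ ζ x : ℕ} (h : ξ ≤ ζ) : cnt k T ξ x ≤ cnt k T ζ x := by
  apply Finset.card_le_card
  intro r hr
  rw [Finset.mem_filter] at hr ⊢
  exact ⟨hr.1, by omega⟩

lemma cnt_up {P : Fin n → Bool} {k : ℕ} {T : {c : ℕ × ℕ // c ∈ F n P} → ℕ}
    (hT : isTab n P T) {x : ℕ} (hx : x + 1 ≤ n) (hstp : stp n P (x+1) = true) (ξ : ℕ) :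
    cnt k T ξ (x+1) ≤ cnt k T ξ x ∧ cnt k T ξ x ≤ cnt k T ξ (x+1) + 1 := by
  have hD : dcQ n P (x+1) = dcQ n P x := by rw [dcQ_succ, hstp]; simp
  set D := dcQ n P x with hDdef
  set A := (Finset.Icc 1 D).filter (fun r => k - ξ < Tv T x r) with hA
  set B := (Finset.Icc 1 (dcQ n P (x+1))).filter (fun r => k - ξ < Tv T (x+1) r) with hB
  have hBA : B ⊆ A := by
    intro r hr
    rw [hB, Finset.mem_filter, Finset.mem_Icc, hD] at hr
    rw [hA, Finset.mem_filter, Finset.mem_Icc]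
    refine ⟨⟨hr.1.1, hr.1.2⟩, ?_⟩
    have m1 : cellOf n (x+1) r ∈ F n P := cellOf_mem P hx hr.1.1 (by omega)
    have m2 : cellOf n x r ∈ F n P := cellOf_mem P (by omega) hr.1.1 hr.1.2
    have := row_rel hT hx m1 m2
    omega
  have hAB : A.card ≤ B.card + 1 := by
    have h1 : A ⊆ insert D (A.erase D) := by
      intro a ha
      rw [Finset.mem_insert, Finset.mem_erase]
      by_cases h : a = D
      · exact Or.inl h
      · exact Or.inr ⟨h, ha⟩
    have h2 : ((A.erase D).image (· + 1)) ⊆ B := by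
      intro b hb
      rw [Finset.mem_image] at hb
      obtain ⟨a, ha, rfl⟩ := hb
      rw [Finset.mem_erase, hA, Finset.mem_filter, Finset.mem_Icc] at ha
      obtain ⟨hne, ⟨ha1, ha2⟩, hav⟩ := ha
      rw [hB, Finset.mem_filter, Finset.mem_Icc, hD]
      refine ⟨⟨by omega, by omega⟩, ?_⟩
      have m1 : cellOf n x a ∈ F n P := cellOf_mem P (by omega) ha1 ha2
      have m2 : cellOf n (x+1) (a+1) ∈ F n P := cellOf_mem P hx (by omega) (by omega)
      have := diag_rel hT hx m1 m2
      omega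
    have h3 : (A.erase D).card = ((A.erase D).image (· + 1)).card :=
      (Finset.card_image_of_injective _ (fun a b hab => by omega)).symm
    calc A.card ≤ (insert D (A.erase D)).card := Finset.card_le_card h1
      _ ≤ (A.erase D).card + 1 := Finset.card_insert_le _ _
      _ = ((A.erase D).image (· + 1)).card + 1 := by rw [h3]
      _ ≤ B.card + 1 := by have := Finset.card_le_card h2; omega
  exact ⟨Finset.card_le_card hBA, hAB⟩

lemma cnt_down {P : Fin n → Bool} {k : ℕ} {T : {c : ℕ × ℕ // c ∈ F n P} → ℕ}
    (hT : isTab n P T) {x : ℕ} (hx : x + 1 ≤ n) (hstp : stp n P (x+1) = false) (ξ : ℕ) :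
    cnt k T ξ x ≤ cnt k T ξ (x+1) ∧ cnt k T ξ (x+1) ≤ cnt k T ξ x + 1 := by
  have hD : dcQ n P (x+1) = dcQ n P x + 1 := by rw [dcQ_succ, hstp]; simp
  set D := dcQ n P x with hDdef
  set A := (Finset.Icc 1 D).filter (fun r => k - ξ < Tv T x r) with hA
  set B := (Finset.Icc 1 (dcQ n P (x+1))).filter (fun r => k - ξ < Tv T (x+1) r) with hB
  have hAB : (A.image (· + 1)) ⊆ B := by
    intro b hb
    rw [Finset.mem_image] at hb
    obtain ⟨a, ha, rfl⟩ := hb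
    rw [hA, Finset.mem_filter, Finset.mem_Icc] at ha
    obtain ⟨⟨ha1, ha2⟩, hav⟩ := ha
    rw [hB, Finset.mem_filter, Finset.mem_Icc, hD]
    refine ⟨⟨by omega, by omega⟩, ?_⟩
    have m1 : cellOf n x a ∈ F n P := cellOf_mem P (by omega) ha1 ha2
    have m2 : cellOf n (x+1) (a+1) ∈ F n P := cellOf_mem P hx (by omega) (by omega)
    have := diag_rel hT hx m1 m2
    omega
  have hBA : B.erase (D+1) ⊆ A := by
    intro r hr
    rw [Finset.mem_erase, hB, Finset.mem_filter, Finset.mem_Icc, hD] at hr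
    obtain ⟨hne, ⟨hr1, hr2⟩, hrv⟩ := hr
    rw [hA, Finset.mem_filter, Finset.mem_Icc]
    refine ⟨⟨hr1, by omega⟩, ?_⟩
    have m1 : cellOf n (x+1) r ∈ F n P := cellOf_mem P hx hr1 (by omega)
    have m2 : cellOf n x r ∈ F n P := cellOf_mem P (by omega) hr1 (by omega)
    have := row_rel hT hx m1 m2
    omega
  constructor
  · have h3 : A.card = (A.image (· + 1)).card :=
      (Finset.card_image_of_injective _ (fun a b hab => by omega)).symm
    have h4 := Finset.card_le_card hAB
    show A.card ≤ B.card
    omega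
  · have h1 : B ⊆ insert (D+1) (B.erase (D+1)) := by
      intro b hb
      rw [Finset.mem_insert, Finset.mem_erase]
      by_cases h : b = D + 1
      · exact Or.inl h
      · exact Or.inr ⟨h, hb⟩
    calc B.card ≤ (insert (D+1) (B.erase (D+1))).card := Finset.card_le_card h1
      _ ≤ (B.erase (D+1)).card + 1 := Finset.card_insert_le _ _
      _ ≤ A.card + 1 := by have := Finset.card_le_card hBA; omega

lemma htsT_step {P : Fin n → Bool} {k : ℕ} {T : {c : ℕ × ℕ // c ∈ F n P} → ℕ}
    (hT : isTab n P T) {x : ℕ} (hx : x < n) (ξ : ℕ) :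
    htsT k T ξ (x+1) = htsT k T ξ x + 1 ∨ htsT k T ξ (x+1) = htsT k T ξ x - 1 := by
  unfold htsT
  rw [ht_succ]
  cases hstp : stp n P (x+1) with
  | true =>
    have := cnt_up (k := k) hT (by omega) hstp ξ
    simp only [if_true]
    rcases Nat.lt_or_ge (cnt k T ξ (x+1)) (cnt k T ξ x) with h | h
    · right; push_cast; omega
    · left; push_cast; omega
  | false =>
    have := cnt_down (k := k) hT (by omega) hstp ξ
    simp only [Bool.false_eq_true, if_false]
    rcases Nat.lt_or_ge (cnt k T ξ x) (cnt k T ξ (x+1)) with h | h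
    · left; push_cast; omega
    · right; push_cast; omega

lemma htsT_zero {P : Fin n → Bool} {k : ℕ} (T : {c : ℕ × ℕ // c ∈ F n P} → ℕ)
    (ξ : ℕ) : htsT k T ξ 0 = 0 := by
  unfold htsT cnt
  rw [dcQ_zero, ht_zero]
  simp

lemma ht_bwdPath {P : Fin n → Bool} {k : ℕ} {T : {c : ℕ × ℕ // c ∈ F n P} → ℕ}
    (hT : isTab n P T) (ξ : ℕ) : ∀ x ≤ n, ht n (bwdPath k T ξ) x = htsT k T ξ x := by
  intro x
  induction x with
  | zero => intro _; rw [ht_zero, htsT_zero]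
  | succ x ih =>
    intro hx1
    have hx : x < n := by omega
    have ihx := ih (by omega)
    rw [ht_succ, stp_of_lt _ hx]
    have hQ : bwdPath k T ξ ⟨x, hx⟩ = decide (htsT k T ξ x < htsT k T ξ (x + 1)) := rfl
    rcases htsT_step (k := k) hT hx ξ with h | h
    · rw [hQ, h]
      simp only [decide_eq_true_eq]
      rw [if_pos (by omega)]
      omega
    · rw [hQ, h]
      rw [if_neg (by simp only [decide_eq_true_eq]; omega)]
      omega

/-- heights along a multichain, with index clamped to `[0,k]` -/
def htsC {n : ℕ} (k : ℕ) (C : Fin (k + 1) → Fin n → Bool) (ξ x : ℕ) : ℤ :=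
  ht n (C ⟨min ξ k, by omega⟩) x

lemma pLE_refl (Q : Fin n → Bool) : pLE n Q Q := fun _ _ => le_refl _

lemma pLE_trans {Q R S : Fin n → Bool} (h1 : pLE n Q R) (h2 : pLE n R S) :
    pLE n Q S := fun x hx => le_trans (h1 x hx) (h2 x hx)

lemma chain_le {k : ℕ} {P : Fin n → Bool} {C : Fin (k + 1) → Fin n → Bool}
    (hmc : isMultichain n k P C) :
    ∀ b, (hb : b ≤ k) → ∀ a, (hab : a ≤ b) →
      pLE n (C ⟨a, by omega⟩) (C ⟨b, by omega⟩) := by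
  intro b
  induction b with
  | zero =>
    intro hb a hab
    have : a = 0 := by omega
    subst this
    exact pLE_refl _
  | succ b ih =>
    intro hb a hab
    rcases Nat.lt_or_ge a (b+1) with h | h
    · have step : pLE n (C ⟨b, by omega⟩) (C ⟨b+1, by omega⟩) := by
        have := hmc.1 ⟨b, by omega⟩
        exact this
      exact pLE_trans (ih (by omega) a (by omega)) step
    · have : a = b + 1 := by omega
      subst this
      exact pLE_refl _

lemma htsC_mono {k : ℕ} {P : Fin n → Bool} {C : Fin (k + 1) → Fin n → Bool}
    (hmc : isMultichain n k P C) {x : ℕ} (hx : x ≤ n) {ξ ζ : ℕ} (h : ξ ≤ ζ) :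
    htsC k C ξ x ≤ htsC k C ζ x := by
  unfold htsC
  exact chain_le hmc (min ζ k) (by omega) (min ξ k) (by omega) x hx

lemma htsC_zero {k : ℕ} {P : Fin n → Bool} {C : Fin (k + 1) → Fin n → Bool}
    (hmc : isMultichain n k P C) (x : ℕ) : htsC k C 0 x = ht n P x := by
  unfold htsC
  have h0 : (⟨min 0 k, by omega⟩ : Fin (k+1)) = 0 := by
    apply Fin.ext
    simp
  rw [h0, hmc.2.1]

lemma htsC_k {k : ℕ} {P : Fin n → Bool} {C : Fin (k + 1) → Fin n → Bool}
    (hmc : isMultichain n k P C) {ξ : ℕ} (hξ : k ≤ ξ) (x : ℕ) : htsC k C ξ x = x := by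
  unfold htsC
  have h0 : (⟨min ξ k, by omega⟩ : Fin (k+1)) = Fin.last k := by
    apply Fin.ext
    simp [Fin.last]
    omega
  rw [h0, hmc.2.2, ht_pTop]

lemma htsC_lip {k : ℕ} (C : Fin (k + 1) → Fin n → Bool) (ξ x : ℕ) :
    htsC k C ξ (x+1) = htsC k C ξ x + 1 ∨ htsC k C ξ (x+1) = htsC k C ξ x - 1 :=
  ht_lipschitz _ x

/-- the forward map: the tableau associated with a multichain -/
def fwdT {n : ℕ} (k : ℕ) {P : Fin n → Bool} (C : Fin (k + 1) → Fin n → Bool)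
    (c : {c : ℕ × ℕ // c ∈ F n P}) : ℕ :=
  ((Finset.Icc 1 k).filter (fun ξ => cellY n c.1 < htsC k C ξ (cellX n c.1))).card

lemma fwd_bracket {k : ℕ} {P : Fin n → Bool} {C : Fin (k + 1) → Fin n → Bool}
    (hmc : isMultichain n k P C) (hk : 0 < k) (c : {c : ℕ × ℕ // c ∈ F n P}) :
    1 ≤ fwdT k C c ∧ fwdT k C c ≤ k ∧
      htsC k C (k - fwdT k C c) (cellX n c.1) ≤ cellY n c.1 ∧
      cellY n c.1 < htsC k C (k - fwdT k C c + 1) (cellX n c.1) := by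
  obtain ⟨hr1, hx1, hxn, hrd, hcell, hY⟩ := cell_facts P c.2
  set x := cellX n c.1 with hxdef
  set y := cellY n c.1 with hydef
  set S := (Finset.Icc 1 k).filter (fun ξ => y < htsC k C ξ x) with hS
  have htS : fwdT k C c = S.card := rfl
  set t := fwdT k C c with htdef
  have htop : htsC k C k x = x := htsC_k hmc (le_refl k) x
  have hkS : k ∈ S := by
    rw [hS, Finset.mem_filter, Finset.mem_Icc]
    refine ⟨⟨hk, le_refl k⟩, ?_⟩
    rw [htop, hY]
    have : (1 : ℤ) ≤ c.1.1 := by exact_mod_cast hr1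
    omega
  have h1 : 1 ≤ t := by
    rw [htS]; exact Finset.card_pos.mpr ⟨k, hkS⟩
  have h2 : t ≤ k := by
    rw [htS]
    calc S.card ≤ (Finset.Icc 1 k).card := Finset.card_le_card (Finset.filter_subset _ _)
      _ = k := by rw [Nat.card_Icc]; omega
  refine ⟨by omega, by omega, ?_, ?_⟩
  · -- htsC (k - t) ≤ y
    rcases Nat.eq_zero_or_pos (k - t) with h0 | hpos
    · rw [h0, htsC_zero hmc, ht_eq, hY]
      have hcast : (c.1.1 : ℤ) ≤ (dcQ n P x : ℤ) := by exact_mod_cast hrd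
      omega
    · by_contra hcon
      push_neg at hcon
      have hsub : Finset.Icc (k - t) k ⊆ S := by
        intro ξ hξ
        rw [Finset.mem_Icc] at hξ
        rw [hS, Finset.mem_filter, Finset.mem_Icc]
        refine ⟨⟨by omega, hξ.2⟩, ?_⟩
        calc y < htsC k C (k - t) x := hcon
          _ ≤ htsC k C ξ x := htsC_mono hmc hxn hξ.1
      have hcc := Finset.card_le_card hsub
      rw [Nat.card_Icc, ← htS] at hcc
      omega
  · by_contra hcon
    push_neg at hcon
    have hsub : S ⊆ Finset.Icc (k - t + 2) k := by
      intro ξ hξ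
      rw [hS, Finset.mem_filter, Finset.mem_Icc] at hξ
      rw [Finset.mem_Icc]
      refine ⟨?_, hξ.1.2⟩
      by_contra hlt
      push_neg at hlt
      have : htsC k C ξ x ≤ htsC k C (k - t + 1) x := htsC_mono hmc hxn (by omega)
      omega
    have hcc := Finset.card_le_card hsub
    rw [Nat.card_Icc, ← htS] at hcc
    omega

lemma fwd_gt_iff {k : ℕ} {P : Fin n → Bool} {C : Fin (k + 1) → Fin n → Bool}
    (hmc : isMultichain n k P C) (hk : 0 < k) (c : {c : ℕ × ℕ // c ∈ F n P})
    {ζ : ℕ} (hζ1 : 1 ≤ ζ) (hζk : ζ ≤ k) :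
    k - ζ < fwdT k C c ↔ cellY n c.1 < htsC k C ζ (cellX n c.1) := by
  obtain ⟨hr1, hx1, hxn, hrd, hcell, hY⟩ := cell_facts P c.2
  obtain ⟨h1, h2, h3, h4⟩ := fwd_bracket hmc hk c
  set t := fwdT k C c
  constructor
  · intro h
    calc cellY n c.1 < htsC k C (k - t + 1) (cellX n c.1) := h4
      _ ≤ htsC k C ζ (cellX n c.1) := htsC_mono hmc hxn (by omega)
  · intro h
    by_contra hc
    push_neg at hc
    have : htsC k C ζ (cellX n c.1) ≤ htsC k C (k - t) (cellX n c.1) :=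
      htsC_mono hmc hxn (by omega)
    omega

lemma corr_fwd {k : ℕ} {P : Fin n → Bool} {C : Fin (k + 1) → Fin n → Bool}
    (hmc : isMultichain n k P C) (hk : 0 < k) : corr n k P C (fwdT k C) := by
  intro c ξ hξ
  obtain ⟨hr1, hx1, hxn, hrd, hcell, hY⟩ := cell_facts P c.2
  obtain ⟨h1, h2, h3, h4⟩ := fwd_bracket hmc hk c
  set t := fwdT k C c with htdef
  have e1 : ht n (C ⟨ξ, by omega⟩) (cellX n c.1) = htsC k C ξ (cellX n c.1) := by
    unfold htsC
    have hfin : (⟨ξ, by omega⟩ : Fin (k+1)) = ⟨min ξ k, by omega⟩ := Fin.ext (by show ξ = min ξ k; omega)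
    rw [hfin]
  have e2 : ht n (C ⟨ξ + 1, by omega⟩) (cellX n c.1) = htsC k C (ξ+1) (cellX n c.1) := by
    unfold htsC
    have hfin : (⟨ξ + 1, by omega⟩ : Fin (k+1)) = ⟨min (ξ+1) k, by omega⟩ := Fin.ext (by show ξ + 1 = min (ξ+1) k; omega)
    rw [hfin]
  rw [e1, e2]
  constructor
  · intro heq
    have hxt : ξ = k - t := by omega
    subst hxt
    exact ⟨h3, h4⟩
  · rintro ⟨hl, hr⟩
    have : ξ = k - t := by
      rcases Nat.lt_trichotomy ξ (k - t) with h | h | h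
      · exfalso
        have : htsC k C (ξ + 1) (cellX n c.1) ≤ htsC k C (k - t) (cellX n c.1) :=
          htsC_mono hmc hxn (by omega)
        omega
      · exact h
      · exfalso
        have : htsC k C (k - t + 1) (cellX n c.1) ≤ htsC k C ξ (cellX n c.1) :=
          htsC_mono hmc hxn (by omega)
        omega
    omega

lemma fwd_le {k : ℕ} {P : Fin n → Bool} (C : Fin (k + 1) → Fin n → Bool)
    (c : {c : ℕ × ℕ // c ∈ F n P}) : fwdT k C c ≤ k := by
  unfold fwdT
  calc _ ≤ (Finset.Icc 1 k).card := Finset.card_le_card (Finset.filter_subset _ _)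
    _ = k := by rw [Nat.card_Icc]; omega

lemma isTab_fwd {k : ℕ} {P : Fin n → Bool} {C : Fin (k + 1) → Fin n → Bool}
    (hmc : isMultichain n k P C) (hk : 0 < k) : isTab n P (fwdT k C) := by
  refine ⟨fun c => (fwd_bracket hmc hk c).1, ?_, ?_⟩
  · -- rows
    intro c c' hr hj
    obtain ⟨hr1, hx1, hxn, hrd, hcell, hY⟩ := cell_facts P c.2
    obtain ⟨hr1', hx1', hxn', hrd', hcell', hY'⟩ := cell_facts P c'.2
    apply Finset.card_le_card
    intro ξ hξ
    rw [Finset.mem_filter, Finset.mem_Icc] at hξ ⊢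
    refine ⟨hξ.1, ?_⟩
    have hx : cellX n c.1 = cellX n c'.1 + 1 := by
      have e1 : cellX n c.1 = n + c.1.1 - c.1.2 := rfl
      have e2 : cellX n c'.1 = n + c'.1.1 - c'.1.2 := rfl
      have hb : c'.1.2 + 1 ≤ n + c'.1.1 := ((mem_F_iff P _ _).mp (by
        rw [show (c'.1.1, c'.1.2) = c'.1 from rfl]; exact c'.2)).2.2.1
      omega
    have hy : cellY n c'.1 = cellY n c.1 - 1 := by
      unfold cellY
      rw [← hr, ← hj]
      push_cast
      ring
    have hlip := htsC_lip (n := n) C ξ (cellX n c'.1)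
    rw [← hx] at hlip
    have := hξ.2
    omega
  · -- columns
    intro c c' hr hj
    obtain ⟨hr1, hx1, hxn, hrd, hcell, hY⟩ := cell_facts P c.2
    obtain ⟨hr1', hx1', hxn', hrd', hcell', hY'⟩ := cell_facts P c'.2
    apply Finset.card_le_card
    intro ξ hξ
    rw [Finset.mem_filter, Finset.mem_Icc] at hξ ⊢
    refine ⟨hξ.1, ?_⟩
    have hx : cellX n c'.1 = cellX n c.1 + 1 := by
      have e1 : cellX n c.1 = n + c.1.1 - c.1.2 := rfl
      have e2 : cellX n c'.1 = n + c'.1.1 - c'.1.2 := rfl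
      have hb : c.1.2 + 1 ≤ n + c.1.1 := ((mem_F_iff P _ _).mp (by
        rw [show (c.1.1, c.1.2) = c.1 from rfl]; exact c.2)).2.2.1
      omega
    have hy : cellY n c'.1 = cellY n c.1 - 1 := by
      unfold cellY
      rw [← hr, ← hj]
      push_cast
      ring
    have hlip := htsC_lip (n := n) C ξ (cellX n c.1)
    rw [← hx] at hlip
    have := hξ.2
    omega

lemma cellX_cellOf {x r : ℕ} (hx1 : 1 ≤ x) (hxn : x ≤ n) :
    cellX n (cellOf n x r) = x := by
  unfold cellX cellOf
  simp only
  omega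

lemma cellY_cellOf {x r : ℕ} (hx1 : 1 ≤ x) (hxn : x ≤ n) :
    cellY n (cellOf n x r) = (x : ℤ) - 2 * r := by
  unfold cellY cellOf
  simp only
  omega

/-- the backward map: the multichain associated with a tableau -/
noncomputable def bwdC {P : Fin n → Bool} (k : ℕ)
    (T : {c : ℕ × ℕ // c ∈ F n P} → ℕ) : Fin (k + 1) → Fin n → Bool :=
  fun ξ => bwdPath k T (ξ : ℕ)

lemma htsT_mono {P : Fin n → Bool} {k : ℕ} {T : {c : ℕ × ℕ // c ∈ F n P} → ℕ}
    {ξ ζ : ℕ} (h : ξ ≤ ζ) (x : ℕ) : htsT k T ξ x ≤ htsT k T ζ x := by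
  unfold htsT
  have := cnt_mono (k := k) (T := T) (x := x) h
  omega

lemma mc_bwd {P : Fin n → Bool} {k : ℕ} {T : {c : ℕ × ℕ // c ∈ F n P} → ℕ}
    (hT : isTab n P T) (hTk : ∀ c, T c ≤ k) : isMultichain n k P (bwdC k T) := by
  refine ⟨?_, ?_, ?_⟩
  · intro i
    show pLE n (bwdPath k T ((i.castSucc : Fin (k+1)) : ℕ)) (bwdPath k T ((i.succ : Fin (k+1)) : ℕ))
    intro x hx
    rw [ht_bwdPath hT _ x hx, ht_bwdPath hT _ x hx]
    apply htsT_mono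
    simp
  · show bwdPath k T ((0 : Fin (k+1)) : ℕ) = P
    have h0 : ((0 : Fin (k+1)) : ℕ) = 0 := by simp
    rw [h0]
    apply ht_ext
    intro x hx
    rw [ht_bwdPath hT _ x hx]
    unfold htsT
    rw [cnt_zero hTk]
    omega
  · show bwdPath k T ((Fin.last k : Fin (k+1)) : ℕ) = pTop n
    have h0 : ((Fin.last k : Fin (k+1)) : ℕ) = k := rfl
    rw [h0]
    apply ht_ext
    intro x hx
    rw [ht_bwdPath hT _ x hx, ht_pTop]
    unfold htsT
    rw [cnt_k hT hx (le_refl k), ht_eq]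
    omega

lemma left_inv_lemma {k : ℕ} {P : Fin n → Bool} {C : Fin (k + 1) → Fin n → Bool}
    (hmc : isMultichain n k P C) (hk : 0 < k) : bwdC k (fwdT (P := P) k C) = C := by
  have hTab := isTab_fwd hmc hk
  funext ξ
  show bwdPath k (fwdT k C) (ξ : ℕ) = C ξ
  apply ht_ext
  intro x hx
  rw [ht_bwdPath hTab _ x hx]
  have hξk : (ξ : ℕ) ≤ k := by omega
  rcases Nat.eq_zero_or_pos (ξ : ℕ) with h0 | hpos
  · unfold htsT
    rw [h0, cnt_zero (fun c => fwd_le C c)]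
    have hξ0 : ξ = 0 := Fin.ext (by simp [h0])
    rw [hξ0, hmc.2.1]
    omega
  · -- 1 ≤ ξ
    have hCle : pLE n P (C ξ) := by
      have h1 := chain_le hmc (ξ : ℕ) hξk 0 (by omega)
      have e0 : (⟨0, by omega⟩ : Fin (k+1)) = 0 := Fin.ext (by simp)
      have eξ : (⟨(ξ : ℕ), by omega⟩ : Fin (k+1)) = ξ := Fin.ext rfl
      rw [e0, eξ, hmc.2.1] at h1
      exact h1
    have hhtP := hCle x hx
    set s := dcQ n (C ξ) x with hsdef
    have hes : ht n (C ξ) x = (x : ℤ) - 2 * s := ht_eq _ x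
    have hesP : ht n P x = (x : ℤ) - 2 * dcQ n P x := ht_eq _ x
    have hsle : s ≤ dcQ n P x := by omega
    have hhtsCe : htsC k C (ξ : ℕ) x = ht n (C ξ) x := by
      have hfin : (⟨min (ξ:ℕ) k, by omega⟩ : Fin (k+1)) = ξ := by
        apply Fin.ext
        show min (ξ:ℕ) k = (ξ:ℕ)
        omega
      unfold htsC
      rw [hfin]
    have hcond : ∀ r, 1 ≤ r → r ≤ dcQ n P x →
        ((k - (ξ:ℕ) < Tv (fwdT (P := P) k C) x r) ↔ s < r) := by
      intro r hr1 hr2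
      have hx1 : 1 ≤ x := by
        by_contra hh
        have : x = 0 := by omega
        rw [this, dcQ_zero] at hr2
        omega
      have m : cellOf n x r ∈ F n P := cellOf_mem P hx hr1 hr2
      rw [Tv_mem m]
      rw [fwd_gt_iff hmc hk ⟨cellOf n x r, m⟩ hpos hξk]
      rw [cellX_cellOf hx1 hx, cellY_cellOf hx1 hx, hhtsCe, hes]
      constructor <;> intro <;> omega
    have hfe : (Finset.Icc 1 (dcQ n P x)).filter (fun r => k - (ξ:ℕ) < Tv (fwdT (P := P) k C) x r)
        = Finset.Icc (s+1) (dcQ n P x) := by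
      ext r
      rw [Finset.mem_filter, Finset.mem_Icc, Finset.mem_Icc]
      constructor
      · rintro ⟨⟨hr1, hr2⟩, hv⟩
        have := (hcond r hr1 hr2).mp hv
        omega
      · rintro ⟨hs1, hr2⟩
        have hr1 : 1 ≤ r := by omega
        exact ⟨⟨hr1, hr2⟩, (hcond r hr1 hr2).mpr (by omega)⟩
    unfold htsT cnt
    rw [hfe, Nat.card_Icc, hes, hesP]
    have : dcQ n P x + 1 - (s + 1) = dcQ n P x - s := by omega
    rw [this]
    omega

lemma right_inv_lemma {k : ℕ} {P : Fin n → Bool} {T : {c : ℕ × ℕ // c ∈ F n P} → ℕ}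
    (hT : isTab n P T) (hTk : ∀ c, T c ≤ k) (hk : 0 < k) : fwdT k (bwdC k T) = T := by
  funext c
  obtain ⟨hr1, hx1, hxn, hrd, hcell, hY⟩ := cell_facts P c.2
  set r := c.1.1 with hrdef
  set x := cellX n c.1 with hxdef
  have m : cellOf n x r ∈ F n P := hcell ▸ c.2
  have hTc : Tv T x r = T c := by
    rw [Tv_mem m]
    congr 1
    exact Subtype.ext hcell.symm
  have hTc1 : 1 ≤ T c := hT.1 c
  have hTck : T c ≤ k := hTk c
  have hcond : ∀ ξ, 1 ≤ ξ → ξ ≤ k →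
      ((cellY n c.1 < htsC k (bwdC k T) ξ x) ↔ k - ξ < T c) := by
    intro ξ hξ1 hξk
    have he : htsC k (bwdC k T) ξ x = htsT k T ξ x := by
      unfold htsC bwdC
      have : ((⟨min ξ k, by omega⟩ : Fin (k+1)) : ℕ) = ξ := by show min ξ k = ξ; omega
      rw [this]
      exact ht_bwdPath hT ξ x hxn
    rw [he, hY]
    unfold htsT
    have hesP : ht n P x = (x : ℤ) - 2 * dcQ n P x := ht_eq _ x
    constructor
    · intro h
      -- cnt ≥ dcQ - r + 1, so the cell (x, r) has a large entry
      by_contra hc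
      push_neg at hc
      have hTle : T c ≤ k - ξ := by omega
      have hsub : (Finset.Icc 1 (dcQ n P x)).filter (fun r' => k - ξ < Tv T x r')
          ⊆ Finset.Icc (r+1) (dcQ n P x) := by
        intro r' hr'
        rw [Finset.mem_filter, Finset.mem_Icc] at hr'
        rw [Finset.mem_Icc]
        refine ⟨?_, hr'.1.2⟩
        by_contra hle
        push_neg at hle
        have := colMono' hT hxn hr'.1.1 (by omega : r' ≤ r) hrd
        rw [hTc] at this
        have := hr'.2
        omega
      have hcc := Finset.card_le_card hsub
      rw [Nat.card_Icc] at hcc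
      unfold cnt at h
      omega
    · intro h
      have hsub : Finset.Icc r (dcQ n P x) ⊆
          (Finset.Icc 1 (dcQ n P x)).filter (fun r' => k - ξ < Tv T x r') := by
        intro r' hr'
        rw [Finset.mem_Icc] at hr'
        rw [Finset.mem_filter, Finset.mem_Icc]
        refine ⟨⟨by omega, hr'.2⟩, ?_⟩
        have := colMono' hT hxn hr1 hr'.1 hr'.2
        rw [hTc] at this
        omega
      have hcc := Finset.card_le_card hsub
      rw [Nat.card_Icc] at hcc
      unfold cnt
      omega
  show ((Finset.Icc 1 k).filter (fun ξ => cellY n c.1 < htsC k (bwdC k T) ξ x)).card = T c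
  have hfe : (Finset.Icc 1 k).filter (fun ξ => cellY n c.1 < htsC k (bwdC k T) ξ x)
      = Finset.Icc (k - T c + 1) k := by
    ext ξ
    rw [Finset.mem_filter, Finset.mem_Icc, Finset.mem_Icc]
    constructor
    · rintro ⟨⟨hξ1, hξk⟩, hv⟩
      have := (hcond ξ hξ1 hξk).mp hv
      omega
    · rintro ⟨hξ1, hξk⟩
      have h1 : 1 ≤ ξ := by omega
      exact ⟨⟨h1, hξk⟩, (hcond ξ h1 hξk).mpr (by omega)⟩
  rw [hfe, Nat.card_Icc]
  omega

end Aux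

/-- For `P` of length `n` starting with a downstep and `k ≥ 1`, there is a bijection
between `P–u^n` multichains of length `k` and shifted tableaux of shape `λ(P)` with
maximum entry at most `k`, given by `t_{ij} = k − ξ` as in `corr`. -/
theorem stmt15 (n k : ℕ) (P : Fin n → Bool) (hn : 0 < n)
    (hd : stp n P 1 = false) (hk : 0 < k) :
    ∃ e : {C : Fin (k + 1) → Fin n → Bool // isMultichain n k P C} ≃
          {T : {c : ℕ × ℕ // c ∈ F n P} → ℕ // isTab n P T ∧ ∀ c, T c ≤ k},
      ∀ C, corr n k P C.1 (e C).1 := by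
  refine ⟨⟨fun C => ⟨fwdT k C.1, isTab_fwd C.2 hk, fun c => fwd_le C.1 c⟩,
           fun T => ⟨bwdC k T.1, mc_bwd T.2.1 T.2.2⟩, ?_, ?_⟩, ?_⟩
  · intro C
    exact Subtype.ext (left_inv_lemma C.2 hk)
  · intro T
    exact Subtype.ext (right_inv_lemma T.2.1 T.2.2 hk)
  · intro C
    exact corr_fwd C.2 hk
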